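/- The polynomial V₁₁(b) = π²/12 + b²/48 satisfies the once-punctured-torus unwrapping identity: for b = 0, 2·V₁₁(0) = ∫₀^∞ 2ℓ/(1+exp(ℓ)) dℓ = π²/6. -/

import Mathlib

open MeasureTheory Real Set

lemma hs_basel' : HasSum (fun n : ℕ => (1:ℝ) / ((n:ℝ)+1) ^ 2) (π ^ 2 / 6) := by
  have h1 : HasSum (fun n : ℕ => (1:ℝ) / (((n+1:ℕ)):ℝ) ^ 2) (π ^ 2 / 6) := by
    refine (hasSum_nat_add_iff (f := fun n : ℕ => (1:ℝ)/(n:ℝ)^2) 1).2 ?_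
    simpa using hasSum_zeta_two
  exact h1.congr_fun fun n => by push_cast; ring

lemma hs_even : HasSum (fun n : ℕ => if Even n then (2:ℝ)/(n:ℝ)^2 else 0) (π ^ 2 / 12) := by
  have hg : Function.Injective (fun k : ℕ => 2 * k) := fun a b h => by simpa using h
  rw [← hg.hasSum_iff (f := fun n : ℕ => if Even n then (2:ℝ)/(n:ℝ)^2 else 0)
    (fun x hx => by
      simp only [Set.mem_range, not_exists] at hx
      have : ¬ Even x := by rintro ⟨c, rfl⟩; exact hx c (by ring)
      simp [this])]
  have h2 : HasSum (fun n : ℕ => (1/2 : ℝ) * ((1:ℝ)/(n:ℝ)^2)) ((1/2) * (π^2/6)) :=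
    hasSum_zeta_two.mul_left _
  have := h2.congr_fun (g := fun k : ℕ =>
      (fun n : ℕ => if Even n then (2:ℝ)/(n:ℝ)^2 else 0) (2 * k)) (fun k => ?_)
  · convert this using 1
    · rfl
    · ring
  · simp only [Function.comp]
    have : Even (2 * k) := ⟨k, by ring⟩
    rcases Nat.eq_zero_or_pos k with rfl | hk
    · simp
    · simp only [this, if_true]
      have hk' : ((k:ℝ)) ≠ 0 := Nat.cast_ne_zero.2 hk.ne'
      push_cast
      field_simp

lemma hs_oddfun : HasSum (fun n : ℕ => if Odd n then (2:ℝ)/(n:ℝ)^2 else 0) (π ^ 2 / 4) := by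
  have h2 : HasSum (fun n : ℕ => (2:ℝ) * ((1:ℝ)/(n:ℝ)^2)) (2 * (π^2/6)) :=
    hasSum_zeta_two.mul_left _
  have h3 := h2.sub hs_even
  have heq : (fun n : ℕ => 2 * ((1:ℝ)/(n:ℝ)^2) - (if Even n then (2:ℝ)/(n:ℝ)^2 else 0))
      = fun n : ℕ => if Odd n then (2:ℝ)/(n:ℝ)^2 else 0 := by
    funext n
    rcases Nat.even_or_odd n with h | h
    · simp only [h, if_true, Nat.not_odd_iff_even.2 h, if_false]; ring
    · simp only [Nat.not_even_iff_odd.2 h, if_false, h, if_true]; ring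
  rw [heq] at h3
  convert h3 using 1
  · rfl
  · ring

lemma hs_odd : HasSum (fun k : ℕ => (2:ℝ) / (2*(k:ℝ)+1) ^ 2) (π ^ 2 / 4) := by
  have hg : Function.Injective (fun k : ℕ => 2 * k + 1) := fun a b h => by simpa using h
  have h := (hg.hasSum_iff (f := fun n : ℕ => if Odd n then (2:ℝ)/(n:ℝ)^2 else 0)
    (fun x hx => by
      simp only [Set.mem_range, not_exists] at hx
      have : ¬ Odd x := by rintro ⟨c, rfl⟩; exact hx c rfl
      simp [this])).2 hs_oddfun
  refine h.congr_fun fun k => ?_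
  have : Odd (2 * k + 1) := ⟨k, rfl⟩
  simp only [Function.comp, this, if_true]
  push_cast
  ring_nf

lemma hs_alt : HasSum (fun n : ℕ => (-1:ℝ)^n * (2 / ((n:ℝ)+1) ^ 2)) (π ^ 2 / 6) := by
  set f : ℕ → ℝ := fun n => (-1:ℝ)^n * (2 / ((n:ℝ)+1) ^ 2) with hf
  have he : HasSum (fun k : ℕ => f (2 * k)) (π ^ 2 / 4) := by
    refine hs_odd.congr_fun fun k => ?_
    simp only [hf, pow_mul]
    push_cast
    ring_nf
  have ho : HasSum (fun k : ℕ => f (2 * k + 1)) (-(π ^ 2 / 12)) := by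
    have h2 : HasSum (fun k : ℕ => (-(1/2) : ℝ) * ((1:ℝ)/((k:ℝ)+1)^2)) (-(1/2) * (π^2/6)) :=
      hs_basel'.mul_left _
    have h3 := h2.congr_fun (g := fun k : ℕ => f (2 * k + 1)) (fun k => ?_)
    · convert h3 using 1; ring
    · simp only [hf, pow_succ, pow_mul]
      push_cast
      field_simp
      ring
  have h := he.even_add_odd ho
  convert h using 1
  ring

lemma integrable_texp {c : ℝ} (hc : 0 < c) :
    IntegrableOn (fun t : ℝ => t * Real.exp (-(c * t))) (Ioi 0) := by
  have h := Real.GammaIntegral_convergent (by norm_num : (0:ℝ) < 2)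
  have h2 : IntegrableOn (fun x : ℝ => x * Real.exp (-x)) (Ioi 0) := by
    refine h.congr_fun (fun x hx => ?_) measurableSet_Ioi
    beta_reduce
    rw [show (2:ℝ) - 1 = 1 by norm_num, Real.rpow_one]
    ring
  have h3 := (integrableOn_Ioi_comp_mul_left_iff (fun x : ℝ => x * Real.exp (-x)) 0 hc).2
    (by simpa using h2)
  have h4 : IntegrableOn (fun x : ℝ => 1/c * (c * x * Real.exp (-(c * x)))) (Ioi 0) :=
    h3.const_mul (1/c)
  refine h4.congr_fun (fun x hx => ?_) measurableSet_Ioi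
  field_simp

lemma integral_texp {c : ℝ} (hc : 0 < c) :
    ∫ t in Ioi (0:ℝ), t * Real.exp (-(c * t)) = 1 / c ^ 2 := by
  have h := Real.integral_rpow_mul_exp_neg_mul_Ioi (by norm_num : (0:ℝ) < 2) hc
  rw [show (2:ℝ) - 1 = 1 by norm_num] at h
  rw [show (∫ t in Ioi (0:ℝ), t * Real.exp (-(c * t)))
      = ∫ t in Ioi (0:ℝ), t ^ (1:ℝ) * Real.exp (-(c * t)) by
    refine setIntegral_congr_fun measurableSet_Ioi (fun t ht => ?_)
    rw [Real.rpow_one], h, Real.Gamma_two, mul_one]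
  rw [show ((2:ℝ)) = ((2:ℕ):ℝ) by norm_num, Real.rpow_natCast]
  field_simp

/-- V₁₁(b) = π²/12 + b²/48. -/
noncomputable def V₁₁ (b : ℝ) : ℝ := π ^ 2 / 12 + b ^ 2 / 48

/-- The once-punctured-torus unwrapping identity:
    2·V₁₁(0) = ∫₀^∞ 2ℓ/(1+e^ℓ) dℓ = π²/6. -/
theorem stmt_15 :
    2 * V₁₁ 0 = (∫ l in Ioi (0:ℝ), 2 * l / (1 + Real.exp l)) ∧
    (∫ l in Ioi (0:ℝ), 2 * l / (1 + Real.exp l)) = π ^ 2 / 6 := by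
  set F : ℕ → ℝ → ℝ := fun n t => (-1:ℝ)^n * (2 * (t * Real.exp (-(((n:ℝ)+1) * t)))) with hF
  have hc : ∀ n : ℕ, (0:ℝ) < (n:ℝ)+1 := fun n => by positivity
  have hInt : ∀ n, Integrable (F n) (volume.restrict (Ioi 0)) := fun n =>
    (((integrable_texp (hc n)).const_mul 2).const_mul ((-1)^n))
  have hnorm : ∀ n, (∫ t in Ioi (0:ℝ), ‖F n t‖) = 2 * (1/((n:ℝ)+1)^2) := by
    intro n
    rw [show (∫ t in Ioi (0:ℝ), ‖F n t‖) = ∫ t in Ioi (0:ℝ), 2 * (t * Real.exp (-(((n:ℝ)+1) * t)))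
      from setIntegral_congr_fun measurableSet_Ioi (fun t ht => by
        have ht' : (0:ℝ) < t := ht
        have hnn : (0:ℝ) ≤ 2 * (t * Real.exp (-(((n:ℝ)+1) * t))) := by positivity
        rw [hF]
        simp only [Real.norm_eq_abs, abs_mul, abs_pow, abs_neg, abs_one, one_pow, one_mul]
        rw [abs_of_pos ht', Real.abs_exp, abs_two])]
    rw [integral_const_mul, integral_texp (hc n)]
  have hsum_norm : Summable (fun n => ∫ t in Ioi (0:ℝ), ‖F n t‖) := by
    rw [funext hnorm]
    exact (hs_basel'.summable).mul_left 2
  have key := hasSum_integral_of_summable_integral_norm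
    (μ := volume.restrict (Ioi (0:ℝ))) hInt hsum_norm
  have hval : ∀ n, (∫ t in Ioi (0:ℝ), F n t) = (-1:ℝ)^n * (2 / ((n:ℝ)+1) ^ 2) := by
    intro n
    rw [hF]
    simp only
    rw [integral_const_mul, integral_const_mul, integral_texp (hc n)]
    ring
  rw [funext hval] at key
  have hpt : (∫ t in Ioi (0:ℝ), (∑' n, F n t)) = ∫ l in Ioi (0:ℝ), 2 * l / (1 + Real.exp l) := by
    refine setIntegral_congr_fun measurableSet_Ioi (fun t ht => ?_)
    have ht' : (0:ℝ) < t := ht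
    have hr : ‖-Real.exp (-t)‖ < 1 := by
      rw [norm_neg, Real.norm_eq_abs, abs_of_pos (Real.exp_pos _)]
      exact Real.exp_lt_one_iff.2 (by linarith)
    have hg := (hasSum_geometric_of_norm_lt_one hr).mul_left (2 * t * Real.exp (-t))
    have hfun : ∀ n : ℕ, (2 * t * Real.exp (-t)) * (-Real.exp (-t))^n = F n t := by
      intro n
      rw [hF]
      simp only
      rw [neg_pow, ← Real.exp_nat_mul]
      rw [show Real.exp (-(((n:ℝ)+1) * t)) = Real.exp (-t) * Real.exp ((n:ℝ) * -t) by
        rw [← Real.exp_add]; ring_nf]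
      ring
    have hg2 := hg.congr_fun (fun n => (hfun n).symm)
    rw [hg2.tsum_eq, sub_neg_eq_add, Real.exp_neg]
    have he : Real.exp t ≠ 0 := (Real.exp_pos t).ne'
    have he1 : (1:ℝ) + (Real.exp t)⁻¹ ≠ 0 := by positivity
    have he2 : (1:ℝ) + Real.exp t ≠ 0 := by positivity
    field_simp
    ring
  rw [hpt] at key
  have hI : (∫ l in Ioi (0:ℝ), 2 * l / (1 + Real.exp l)) = π ^ 2 / 6 :=
    key.unique hs_alt
  refine ⟨?_, hI⟩
  rw [hI, V₁₁]
  norm_num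
  ring
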